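/- Let 0 < τ < T, let λ > 0, let Z be uniformly distributed on [0, τ], and let S be exponentially distributed with rate λ, with Z and S independent. Then the probability that Z + S lands in some ON interval [nT, nT + τ), summed over all integers n ≥ 0, equals g := ( e^{−λτ} + λτ − 1 + e^{−λτ}(e^{λτ} − 1)²/(e^{λT} − 1) ) / (λτ); that is, Σ_{n=0}^{∞} P( nT ≤ Z + S < nT + τ ) = g. -/

import Mathlib

open MeasureTheory ProbabilityTheory

noncomputable def myF (lam x : ℝ) : ℝ := if 0 ≤ x then 1 - Real.exp (-(lam*x)) else 0

lemma expMeasure_Iic' {lam : ℝ} (hlam : 0 < lam) (x : ℝ) :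
    expMeasure lam (Set.Iic x) = ENNReal.ofReal (myF lam x) := by
  rw [expMeasure, gammaMeasure, withDensity_apply _ measurableSet_Iic]
  exact lintegral_exponentialPDF_eq_antiDeriv hlam x

lemma expMeasure_singleton' {lam : ℝ} (a : ℝ) : expMeasure lam {a} = 0 := by
  rw [expMeasure, gammaMeasure, withDensity_apply _ (measurableSet_singleton a)]
  rw [Measure.restrict_eq_zero.mpr (measure_singleton a), lintegral_zero_measure]

lemma myF_nonneg' {lam : ℝ} (hlam : 0 < lam) (x : ℝ) : 0 ≤ myF lam x := by
  unfold myF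
  split_ifs with h
  · nlinarith [Real.exp_le_one_iff.mpr (by nlinarith : -(lam*x) ≤ 0)]
  · exact le_refl _

lemma expMeasure_Ico' {lam : ℝ} (hlam : 0 < lam) {a b : ℝ} (hab : a ≤ b) :
    expMeasure lam (Set.Ico a b) = ENNReal.ofReal (myF lam b - myF lam a) := by
  haveI : IsProbabilityMeasure (expMeasure lam) := isProbabilityMeasure_expMeasure hlam
  rw [measure_congr (Ico_ae_eq_Ioc' (expMeasure_singleton' a) (expMeasure_singleton' b)),
    ← Set.Iic_sdiff_Iic,
    measure_diff (Set.Iic_subset_Iic.mpr hab) measurableSet_Iic.nullMeasurableSet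
      (measure_ne_top _ _),
    expMeasure_Iic' hlam, expMeasure_Iic' hlam,
    ENNReal.ofReal_sub _ (myF_nonneg' hlam a)]

lemma Jexp' {τ lam : ℝ} (hτ : 0 < τ) (hlam : 0 < lam) :
    ∫ z in Set.Icc (0:ℝ) τ, Real.exp (lam * z) = (Real.exp (lam*τ) - 1) / lam := by
  rw [integral_Icc_eq_integral_Ioc, ← intervalIntegral.integral_of_le hτ.le]
  rw [intervalIntegral.integral_comp_mul_left (a := (0:ℝ)) (b := τ) (fun x => Real.exp x)
    (ne_of_gt hlam)]
  simp [Real.exp_zero]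
  ring

lemma lint_zero' {τ lam : ℝ} (hτ : 0 < τ) (hlam : 0 < lam) :
    ∫⁻ z in Set.Icc (0:ℝ) τ, expMeasure lam (Set.Ico (0 - z) (0 + τ - z))
      = ENNReal.ofReal (τ - Real.exp (-(lam*τ)) * ((Real.exp (lam*τ) - 1) / lam)) := by
  have h1 : ∀ z ∈ Set.Icc (0:ℝ) τ,
      expMeasure lam (Set.Ico (0 - z) (0 + τ - z))
        = ENNReal.ofReal (1 - Real.exp (-(lam*τ)) * Real.exp (lam*z)) := by
    intro z hz
    obtain ⟨hz0, hzτ⟩ := hz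
    rw [expMeasure_Ico' hlam (by linarith)]
    congr 1
    unfold myF
    rw [if_pos (by linarith : (0:ℝ) ≤ 0 + τ - z)]
    rcases eq_or_lt_of_le hz0 with h | h
    · rw [if_pos (by linarith : (0:ℝ) ≤ 0 - z)]
      rw [← h]
      simp [← Real.exp_add]
    · rw [if_neg (by simp; linarith : ¬ (0:ℝ) ≤ 0 - z)]
      rw [← Real.exp_add]
      ring_nf
  rw [setLIntegral_congr_fun measurableSet_Icc h1]
  have hint : IntegrableOn (fun z => 1 - Real.exp (-(lam*τ)) * Real.exp (lam*z))
      (Set.Icc (0:ℝ) τ) volume := by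
    apply ContinuousOn.integrableOn_compact isCompact_Icc
    fun_prop
  have hnn : 0 ≤ᵐ[volume.restrict (Set.Icc (0:ℝ) τ)]
      (fun z => 1 - Real.exp (-(lam*τ)) * Real.exp (lam*z)) := by
    apply (ae_restrict_iff' measurableSet_Icc).mpr
    apply ae_of_all
    intro z hz
    have h2 : Real.exp (-(lam*τ)) * Real.exp (lam*z) = Real.exp (-(lam * (τ - z))) := by
      rw [← Real.exp_add]; ring_nf
    simp only
    rw [h2]
    have : -(lam * (τ - z)) ≤ 0 := by nlinarith [hz.1, hz.2]
    simp [Real.exp_le_one_iff.mpr this]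
  rw [← ofReal_integral_eq_lintegral_ofReal hint hnn]
  congr 1
  have hint2 : IntegrableOn (fun z => Real.exp (-(lam*τ)) * Real.exp (lam*z))
      (Set.Icc (0:ℝ) τ) volume := by
    apply ContinuousOn.integrableOn_compact isCompact_Icc
    fun_prop
  rw [integral_sub ((integrableOn_const_iff (C := (1:ℝ)) (s := Set.Icc (0:ℝ) τ) (μ := volume)).mpr (Or.inr measure_Icc_lt_top)) hint2,
    MeasureTheory.integral_const_mul, Jexp' hτ hlam]
  simp [Real.volume_Icc, hτ.le]

lemma lint_pos' {τ lam c : ℝ} (hτ : 0 < τ) (hlam : 0 < lam) (hc : τ ≤ c) :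
    ∫⁻ z in Set.Icc (0:ℝ) τ, expMeasure lam (Set.Ico (c - z) (c + τ - z))
      = ENNReal.ofReal (Real.exp (-(lam*c)) * (1 - Real.exp (-(lam*τ)))
          * ((Real.exp (lam*τ) - 1) / lam)) := by
  have h1 : ∀ z ∈ Set.Icc (0:ℝ) τ,
      expMeasure lam (Set.Ico (c - z) (c + τ - z))
        = ENNReal.ofReal ((Real.exp (-(lam*c)) * (1 - Real.exp (-(lam*τ)))) * Real.exp (lam*z)) := by
    intro z hz
    obtain ⟨hz0, hzτ⟩ := hz
    rw [expMeasure_Ico' hlam (by linarith)]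
    congr 1
    unfold myF
    rw [if_pos (by linarith : (0:ℝ) ≤ c + τ - z), if_pos (by linarith : (0:ℝ) ≤ c - z)]
    rw [show -(lam*(c+τ-z)) = -(lam*c) + -(lam*τ) + lam*z by ring,
      show -(lam*(c-z)) = -(lam*c) + lam*z by ring, Real.exp_add, Real.exp_add, Real.exp_add]
    ring
  rw [setLIntegral_congr_fun measurableSet_Icc h1]
  have hint : IntegrableOn
      (fun z => (Real.exp (-(lam*c)) * (1 - Real.exp (-(lam*τ)))) * Real.exp (lam*z))
      (Set.Icc (0:ℝ) τ) volume := by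
    apply ContinuousOn.integrableOn_compact isCompact_Icc
    fun_prop
  have hnn : 0 ≤ᵐ[volume.restrict (Set.Icc (0:ℝ) τ)]
      (fun z => (Real.exp (-(lam*c)) * (1 - Real.exp (-(lam*τ)))) * Real.exp (lam*z)) := by
    apply ae_of_all
    intro z
    have h2 : Real.exp (-(lam*τ)) ≤ 1 := Real.exp_le_one_iff.mpr (by nlinarith)
    exact mul_nonneg (mul_nonneg (Real.exp_pos _).le (by linarith)) (Real.exp_pos _).le
  rw [← ofReal_integral_eq_lintegral_ofReal hint hnn, MeasureTheory.integral_const_mul,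
    Jexp' hτ hlam]


/-- Closed form for `g` in the exponential case: if `Z ~ Unif(0, τ)` and
`S ~ Exp(lam)` are independent, then the total probability that `Z + S` lands in some
ON interval `[nT, nT + τ)` (summed over `n ≥ 0`) equals
`(e^{-lam τ} + lam τ - 1 + e^{-lam τ}(e^{lam τ} - 1)²/(e^{lam T} - 1)) / (lam τ)`. -/
theorem stmt_5 {Ω : Type*} [MeasurableSpace Ω] (μ : Measure Ω) [IsProbabilityMeasure μ]
    (τ T lam : ℝ) (hτ : 0 < τ) (hτT : τ < T) (hlam : 0 < lam)
    (Z S : Ω → ℝ) (hZmeas : Measurable Z) (hSmeas : Measurable S)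
    (hZunif : Measure.map Z μ = (ENNReal.ofReal τ)⁻¹ • volume.restrict (Set.Icc 0 τ))
    (hSexp : Measure.map S μ = expMeasure lam)
    (hindep : IndepFun Z S μ) :
    ∑' n : ℕ, (μ {ω | (n : ℝ) * T ≤ Z ω + S ω ∧ Z ω + S ω < (n : ℝ) * T + τ}).toReal
      = (Real.exp (-(lam * τ)) + lam * τ - 1 +
          Real.exp (-(lam * τ)) * (Real.exp (lam * τ) - 1) ^ 2 /
            (Real.exp (lam * T) - 1)) / (lam * τ) := by
  haveI : IsProbabilityMeasure (expMeasure lam) := isProbabilityMeasure_expMeasure hlam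
  set J : ℝ := (Real.exp (lam*τ) - 1) / lam with hJ
  set r : ℝ := Real.exp (-(lam*T)) with hr
  set B : ℝ := (1 - Real.exp (-(lam*τ))) * J with hB
  set q : ℕ → ℝ := fun n =>
    if n = 0 then τ⁻¹ * (τ - Real.exp (-(lam*τ)) * J) else τ⁻¹ * B * r^n with hq
  -- Step 1: reduce each term to a lintegral over the uniform variable
  have hmeasP : ∀ n : ℕ,
      μ {ω | (n : ℝ) * T ≤ Z ω + S ω ∧ Z ω + S ω < (n : ℝ) * T + τ}
        = (ENNReal.ofReal τ)⁻¹ *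
          ∫⁻ z in Set.Icc 0 τ, expMeasure lam (Set.Ico ((n:ℝ)*T - z) ((n:ℝ)*T + τ - z)) := by
    intro n
    have hA : MeasurableSet {p : ℝ × ℝ | (n:ℝ)*T ≤ p.1 + p.2 ∧ p.1 + p.2 < (n:ℝ)*T + τ} := by
      apply MeasurableSet.inter
      · exact measurableSet_le measurable_const (measurable_fst.add measurable_snd)
      · exact measurableSet_lt (measurable_fst.add measurable_snd) measurable_const
    have h1 : μ {ω | (n : ℝ) * T ≤ Z ω + S ω ∧ Z ω + S ω < (n : ℝ) * T + τ}
        = (μ.map (fun ω => (Z ω, S ω)))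
            {p : ℝ × ℝ | (n:ℝ)*T ≤ p.1 + p.2 ∧ p.1 + p.2 < (n:ℝ)*T + τ} := by
      rw [Measure.map_apply (hZmeas.prodMk hSmeas) hA]
      rfl
    rw [h1,
      (indepFun_iff_map_prod_eq_prod_map_map hZmeas.aemeasurable hSmeas.aemeasurable).mp hindep,
      hZunif, hSexp, Measure.prod_apply hA, lintegral_smul_measure]
    congr 1
    apply lintegral_congr
    intro z
    congr 1
    ext s
    simp only [Set.mem_preimage, Set.mem_setOf_eq, Set.mem_Ico]
    constructor <;> intro h <;> constructor <;> linarith [h.1, h.2]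
  -- Step 2: evaluate each term
  have hE1 : (1:ℝ) < Real.exp (lam*τ) := Real.one_lt_exp_iff.mpr (by positivity)
  have hJpos : 0 ≤ J := by
    rw [hJ]
    exact div_nonneg (by linarith) hlam.le
  have hexp1 : Real.exp (-(lam*τ)) ≤ 1 := Real.exp_le_one_iff.mpr (by nlinarith)
  have hkey : ∀ n : ℕ,
      (μ {ω | (n : ℝ) * T ≤ Z ω + S ω ∧ Z ω + S ω < (n : ℝ) * T + τ}).toReal = q n := by
    intro n
    rw [hmeasP n]
    cases n with
    | zero =>
      have h0 : ((0:ℕ):ℝ) * T = 0 := by simp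
      simp only [h0]
      have hv : 1 - Real.exp (-(lam*τ)) ≤ lam * τ := by
        nlinarith [Real.add_one_le_exp (-(lam*τ))]
      have hkey2 : Real.exp (-(lam*τ)) * (Real.exp (lam*τ) - 1)
          = 1 - Real.exp (-(lam*τ)) := by
        rw [mul_sub, ← Real.exp_add]
        simp
      have hu : lam * ((Real.exp (lam*τ) - 1) / lam) = Real.exp (lam*τ) - 1 := by
        field_simp
      have hv0 : 0 ≤ τ - Real.exp (-(lam*τ)) * ((Real.exp (lam*τ) - 1) / lam) := by
        nlinarith [Real.exp_pos (-(lam*τ)), mul_pos hlam hτ]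
      rw [lint_zero' hτ hlam, ENNReal.toReal_mul, ENNReal.toReal_inv,
        ENNReal.toReal_ofReal hτ.le, ENNReal.toReal_ofReal hv0]
      simp only [hq, if_pos rfl, hJ]
    | succ m =>
      have hc : τ ≤ ((m+1:ℕ):ℝ) * T := by
        push_cast
        nlinarith [Nat.cast_nonneg (α := ℝ) m]
      rw [lint_pos' hτ hlam hc, ENNReal.toReal_mul, ENNReal.toReal_inv,
        ENNReal.toReal_ofReal hτ.le, ENNReal.toReal_ofReal
          (mul_nonneg (mul_nonneg (Real.exp_pos _).le (by linarith)) hJpos)]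
      have hre : Real.exp (-(lam * ((((m+1:ℕ)):ℝ) * T))) = r^(m+1) := by
        rw [hr, ← Real.exp_nat_mul]
        congr 1
        push_cast
        ring
      rw [hre]
      simp only [hq, hB, hJ, Nat.succ_ne_zero, if_false]
      ring
  rw [tsum_congr hkey]
  -- Step 3: sum the series
  have hr0 : 0 ≤ r := (Real.exp_pos _).le
  have hr1 : r < 1 := Real.exp_lt_one_iff.mpr (by nlinarith)
  have hsum1 : Summable (fun n => q (n+1)) := by
    have : (fun n : ℕ => q (n+1)) = fun n : ℕ => (τ⁻¹ * B * r) * r^n := by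
      funext n
      simp only [hq, Nat.succ_ne_zero, if_false]
      ring
    rw [this]
    exact (summable_geometric_of_lt_one hr0 hr1).mul_left _
  have hsum : Summable q := (summable_nat_add_iff 1).mp hsum1
  rw [hsum.tsum_eq_zero_add]
  have h2 : ∑' n : ℕ, q (n+1) = (τ⁻¹ * B * r) * (1-r)⁻¹ := by
    have : (fun n : ℕ => q (n+1)) = fun n : ℕ => (τ⁻¹ * B * r) * r^n := by
      funext n
      simp only [hq, Nat.succ_ne_zero, if_false]
      ring
    rw [this, tsum_mul_left, tsum_geometric_of_lt_one hr0 hr1]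
  rw [h2]
  -- Step 4: algebra
  have he1 : Real.exp (-(lam*τ)) = (Real.exp (lam*τ))⁻¹ := Real.exp_neg _
  have he2 : r = (Real.exp (lam*T))⁻¹ := by rw [hr]; exact Real.exp_neg _
  have hE2 : (1:ℝ) < Real.exp (lam*T) := Real.one_lt_exp_iff.mpr (by nlinarith)
  have hd1 : Real.exp (lam*T) - 1 ≠ 0 := by linarith
  have hd2 : (1:ℝ) - (Real.exp (lam*T))⁻¹ ≠ 0 := by
    have : (Real.exp (lam*T))⁻¹ < 1 := by
      rw [inv_lt_one_iff₀]
      right; exact hE2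
    linarith
  simp only [hq, if_pos rfl, hB, hJ, he1, he2]
  have hlam' : lam ≠ 0 := ne_of_gt hlam
  have hτ' : τ ≠ 0 := ne_of_gt hτ
  have hex1 : Real.exp (lam*τ) ≠ 0 := (Real.exp_pos _).ne'
  have hex2 : Real.exp (lam*T) ≠ 0 := (Real.exp_pos _).ne'
  field_simp
  ring
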